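/- A function f : ℝ → ℝ computed by a feed-forward ReLU neural network with L hidden layers and at most M neurons per hidden layer (affine maps between layers, ReLU activation σ(x) = max(x,0) applied coordinatewise in hidden layers, affine output) is continuous and piecewise linear with at most (2M)^L linear segments. -/

import Mathlib

/-- A family of `d` scalar functions that is simultaneously piecewise linear
on a common monotone partition with at most `k` pieces. -/
def PLFam (d : ℕ) (g : ℝ → Fin d → ℝ) (k : ℕ) : Prop :=
  ∃ (α β : Fin k → Fin d → ℝ) (idx : ℝ → Fin k), Monotone idx ∧
    ∀ x j, g x j = α (idx x) j * x + β (idx x) j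

lemma PLFam.mono {d k k' : ℕ} {g : ℝ → Fin d → ℝ} (h : PLFam d g k) (hkk : k ≤ k') :
    PLFam d g k' := by
  obtain ⟨α, β, idx, hm, he⟩ := h
  refine ⟨fun p j => if hp : (p : ℕ) < k then α ⟨p, hp⟩ j else 0,
          fun p j => if hp : (p : ℕ) < k then β ⟨p, hp⟩ j else 0,
          fun x => Fin.castLE hkk (idx x), fun x y hxy => ?_, fun x j => ?_⟩
  · exact hm hxy
  · simp only [Fin.coe_castLE, (idx x).isLt, dif_pos]
    simpa using he x j

open Classical in
/-- The "hit" condition: neuron with affine input `a*x+b` has passed its breakpoint. -/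
def hitP (a b x : ℝ) : Prop := a ≠ 0 ∧ -b / a ≤ x

open Classical in
noncomputable def pieceA (a b x : ℝ) : ℝ :=
  if hitP a b x then (if 0 < a then a else 0) else (if a < 0 then a else 0)

open Classical in
noncomputable def pieceB (a b x : ℝ) : ℝ :=
  if hitP a b x then (if 0 < a then b else 0) else
    (if a < 0 then b else if 0 < a then 0 else max b 0)

lemma piece_spec (a b x : ℝ) : max (a * x + b) 0 = pieceA a b x * x + pieceB a b x := by
  classical
  rcases lt_trichotomy a 0 with ha | ha | ha
  · have : hitP a b x ↔ a * x + b ≤ 0 := by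
      unfold hitP
      rw [div_le_iff_of_neg ha]
      constructor
      · rintro ⟨-, h⟩; nlinarith
      · intro h; exact ⟨ne_of_lt ha, by nlinarith⟩
    by_cases h : hitP a b x
    · rw [pieceA, pieceB, if_pos h, if_pos h, if_neg (by linarith), if_neg (by linarith)]
      have := this.mp h
      simp [max_eq_right this]
    · rw [pieceA, pieceB, if_neg h, if_neg h, if_pos ha, if_pos ha]
      have h2 : ¬ a * x + b ≤ 0 := fun hc => h (this.mpr hc)
      rw [max_eq_left (by linarith)]
  · have h : ¬ hitP a b x := fun hc => hc.1 ha
    rw [pieceA, pieceB, if_neg h, if_neg h, if_neg (by simp [ha]), if_neg (by simp [ha])]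
    simp [ha]
  · have : hitP a b x ↔ 0 ≤ a * x + b := by
      unfold hitP
      rw [div_le_iff₀ ha]
      constructor
      · rintro ⟨-, h⟩; nlinarith
      · intro h; exact ⟨ne_of_gt ha, by nlinarith⟩
    by_cases h : hitP a b x
    · rw [pieceA, pieceB, if_pos h, if_pos h, if_pos ha, if_pos ha]
      rw [max_eq_left (this.mp h)]
    · rw [pieceA, pieceB, if_neg h, if_neg h, if_neg (by linarith), if_neg (by linarith)]
      have h2 : ¬ 0 ≤ a * x + b := fun hc => h (this.mpr hc)
      rw [if_pos ha, max_eq_right (by linarith)]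
      ring

lemma pieceA_congr {a b x y : ℝ} (h : hitP a b x ↔ hitP a b y) :
    pieceA a b x = pieceA a b y := by
  classical
  unfold pieceA
  by_cases hx : hitP a b x
  · rw [if_pos hx, if_pos (h.mp hx)]
  · rw [if_neg hx, if_neg (fun hy => hx (h.mpr hy))]

lemma pieceB_congr {a b x y : ℝ} (h : hitP a b x ↔ hitP a b y) :
    pieceB a b x = pieceB a b y := by
  classical
  unfold pieceB
  by_cases hx : hitP a b x
  · rw [if_pos hx, if_pos (h.mp hx)]
  · rw [if_neg hx, if_neg (fun hy => hx (h.mpr hy))]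

open Classical in
/-- Number of neurons whose breakpoint is ≤ x. -/
noncomputable def cntOf (d : ℕ) (a b : Fin d → ℝ) (x : ℝ) : ℕ :=
  (Finset.univ.filter (fun i => hitP (a i) (b i) x)).card

lemma cntOf_le (d : ℕ) (a b : Fin d → ℝ) (x : ℝ) : cntOf d a b x ≤ d := by
  classical
  calc cntOf d a b x ≤ Finset.univ.card := Finset.card_filter_le _ _
  _ = d := Finset.card_univ.trans (Fintype.card_fin d)

lemma hitP_mono {a b x y : ℝ} (hxy : x ≤ y) (h : hitP a b x) : hitP a b y :=
  ⟨h.1, h.2.trans hxy⟩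

lemma cntOf_mono (d : ℕ) (a b : Fin d → ℝ) {x y : ℝ} (hxy : x ≤ y) :
    cntOf d a b x ≤ cntOf d a b y := by
  classical
  apply Finset.card_le_card
  intro i hi
  simp only [Finset.mem_filter, Finset.mem_univ, true_and] at *
  exact hitP_mono hxy hi

lemma cntOf_eq (d : ℕ) (a b : Fin d → ℝ) {x y : ℝ} (hxy : x ≤ y)
    (h : cntOf d a b x = cntOf d a b y) (i : Fin d) :
    hitP (a i) (b i) x ↔ hitP (a i) (b i) y := by
  classical
  have hsub : (Finset.univ.filter (fun i => hitP (a i) (b i) x)) ⊆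
      (Finset.univ.filter (fun i => hitP (a i) (b i) y)) := by
    intro j hj
    simp only [Finset.mem_filter, Finset.mem_univ, true_and] at *
    exact hitP_mono hxy hj
  have heq := Finset.eq_of_subset_of_card_le hsub (le_of_eq h.symm)
  constructor
  · intro hx; exact hitP_mono hxy hx
  · intro hy
    have : i ∈ Finset.univ.filter (fun i => hitP (a i) (b i) x) := by
      rw [heq]; simp [hy]
    simpa using this

lemma div_unique {D s₀ c₀ s c : ℕ} (h₀ : c₀ < D) (h : c < D)
    (e : s₀ * D + c₀ = s * D + c) : s₀ = s ∧ c₀ = c := by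
  have hs : s₀ = s := by
    have h1 : (s₀ * D + c₀) / D = s₀ := by
      rw [mul_comm, Nat.mul_add_div (by omega), Nat.div_eq_of_lt h₀]
      omega
    have h2 : (s * D + c) / D = s := by
      rw [mul_comm, Nat.mul_add_div (by omega), Nat.div_eq_of_lt h]
      omega
    rw [← h1, e, h2]
  subst hs
  exact ⟨rfl, by omega⟩

/-- Key step: composing a PL family with an affine-then-ReLU layer. -/
lemma max_step (k d' : ℕ) (A B : Fin k → Fin d' → ℝ) (idx : ℝ → Fin k)
    (hmono : Monotone idx) :
    PLFam d' (fun x i => max (A (idx x) i * x + B (idx x) i) 0) (k * (d' + 1)) := by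
  classical
  set cnt : ℝ → ℕ := fun x => cntOf d' (A (idx x)) (B (idx x)) x with hcnt
  have hbound : ∀ x : ℝ, (idx x).1 * (d' + 1) + cnt x < k * (d' + 1) := by
    intro x
    have h1 : cnt x ≤ d' := cntOf_le _ _ _ _
    have h2 : (idx x).1 < k := (idx x).isLt
    calc (idx x).1 * (d' + 1) + cnt x < (idx x).1 * (d' + 1) + (d' + 1) := by omega
    _ = ((idx x).1 + 1) * (d' + 1) := by ring
    _ ≤ k * (d' + 1) := Nat.mul_le_mul_right _ (by omega)
  set nidx : ℝ → Fin (k * (d' + 1)) := fun x => ⟨(idx x).1 * (d' + 1) + cnt x, hbound x⟩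
    with hnidx
  -- decompose nidx
  have hdec : ∀ x y : ℝ, nidx x = nidx y → idx x = idx y ∧ cnt x = cnt y := by
    intro x y hxy
    have := Fin.mk.injEq _ _ _ _ ▸ hxy
    have he : (idx x).1 * (d' + 1) + cnt x = (idx y).1 * (d' + 1) + cnt y := by
      simpa [nidx] using congrArg Fin.val hxy
    have h1 : cnt x < d' + 1 := Nat.lt_succ_of_le (cntOf_le _ _ _ _)
    have h2 : cnt y < d' + 1 := Nat.lt_succ_of_le (cntOf_le _ _ _ _)
    obtain ⟨hs, hc⟩ := div_unique h1 h2 he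
    exact ⟨Fin.ext hs, hc⟩
  have hnm : Monotone nidx := by
    intro x y hxy
    rcases lt_or_eq_of_le (hmono hxy) with h | h
    · have h' : (idx x).1 + 1 ≤ (idx y).1 := h
      have hcx : cnt x ≤ d' := cntOf_le _ _ _ _
      have key : ((idx x).1 + 1) * (d' + 1) ≤ (idx y).1 * (d' + 1) :=
        Nat.mul_le_mul_right _ h'
      have expand : ((idx x).1 + 1) * (d' + 1) = (idx x).1 * (d' + 1) + (d' + 1) := by ring
      show (idx x).1 * (d' + 1) + cnt x ≤ (idx y).1 * (d' + 1) + cnt y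
      omega
    · show (idx x).1 * (d' + 1) + cnt x ≤ (idx y).1 * (d' + 1) + cnt y
      rw [← h]
      have : cnt x ≤ cnt y := by
        simp only [hcnt, ← h]
        exact cntOf_mono _ _ _ hxy
      omega
  -- hit condition constancy on classes
  have hhit : ∀ x y : ℝ, nidx x = nidx y → ∀ i,
      hitP (A (idx x) i) (B (idx x) i) x ↔ hitP (A (idx y) i) (B (idx y) i) y := by
    intro x y hxy i
    obtain ⟨hs, hc⟩ := hdec x y hxy
    simp only [hcnt] at hc
    rw [hs] at hc ⊢
    rcases le_total x y with hle | hle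
    · exact cntOf_eq _ _ _ hle hc i
    · exact (cntOf_eq _ _ _ hle hc.symm i).symm
  refine ⟨fun p i => if hp : ∃ x, nidx x = p then
            pieceA (A (idx (Classical.choose hp)) i) (B (idx (Classical.choose hp)) i)
              (Classical.choose hp) else 0,
          fun p i => if hp : ∃ x, nidx x = p then
            pieceB (A (idx (Classical.choose hp)) i) (B (idx (Classical.choose hp)) i)
              (Classical.choose hp) else 0,
          nidx, hnm, ?_⟩
  intro x i
  have hp : ∃ y, nidx y = nidx x := ⟨x, rfl⟩
  simp only [dif_pos hp]
  set x₀ := Classical.choose hp with hx₀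
  have hpx : nidx x₀ = nidx x := Classical.choose_spec hp
  obtain ⟨hs, -⟩ := hdec x₀ x hpx
  have hiff := hhit x x₀ hpx.symm i
  rw [hs] at hiff ⊢
  rw [← pieceA_congr hiff, ← pieceB_congr hiff]
  exact piece_spec _ _ _

lemma plfam_step {d d' k : ℕ} {g : ℝ → Fin d → ℝ} (hg : PLFam d g k)
    (Wm : Matrix (Fin d') (Fin d) ℝ) (bv : Fin d' → ℝ) :
    PLFam d' (fun x i => max (∑ j, Wm i j * g x j + bv i) 0) (k * (d' + 1)) := by
  obtain ⟨α, β, idx, hm, he⟩ := hg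
  have key := max_step k d' (fun s i => ∑ j, Wm i j * α s j)
    (fun s i => (∑ j, Wm i j * β s j) + bv i) idx hm
  have : (fun x i => max (∑ j, Wm i j * g x j + bv i) 0) =
      (fun x i => max ((∑ j, Wm i j * α (idx x) j) * x +
        ((∑ j, Wm i j * β (idx x) j) + bv i)) 0) := by
    funext x i
    congr 1
    simp only [he, mul_add, Finset.sum_add_distrib, Finset.sum_mul, mul_assoc]
    ring
  rw [this]
  exact key



/-- `f : ℝ → ℝ` is piecewise linear with at most `k` segments: there is a
monotone assignment of segment indices such that `f` is affine (with segment-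
dependent coefficients) on each segment. -/
def PLSegments (f : ℝ → ℝ) (k : ℕ) : Prop :=
  ∃ (α β : Fin k → ℝ) (idx : ℝ → Fin k), Monotone idx ∧
    ∀ x : ℝ, f x = α (idx x) * x + β (idx x)

/-- Forward pass through the hidden layers of a ReLU network:
`hiddenPass dims W b k` computes `σ ∘ A_k ∘ ⋯ ∘ σ ∘ A_1`, where
`A_i x = W i x + b i` is affine and `σ` is the coordinatewise ReLU. -/
def hiddenPass (dims : ℕ → ℕ)
    (W : ∀ i : ℕ, Matrix (Fin (dims (i + 1))) (Fin (dims i)) ℝ)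
    (b : ∀ i : ℕ, Fin (dims (i + 1)) → ℝ) :
    ∀ k : ℕ, (Fin (dims 0) → ℝ) → Fin (dims k) → ℝ
  | 0 => fun x => x
  | k + 1 => fun x i =>
      max (∑ j, W k i j * hiddenPass dims W b k x j + b k i) 0

/-- a scalar function computed by a feed-forward ReLU network
with `L` hidden layers of width at most `M` (affine maps between layers,
ReLU in the hidden layers, affine output) is continuous and piecewise linear
with at most `(2M)^L` segments. -/
theorem stmt_9 (L M : ℕ) (hM : 1 ≤ M)
    (dims : ℕ → ℕ) (hdims0 : dims 0 = 1)
    (hdimsM : ∀ i : ℕ, 1 ≤ i → i ≤ L → dims i ≤ M)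
    (W : ∀ i : ℕ, Matrix (Fin (dims (i + 1))) (Fin (dims i)) ℝ)
    (b : ∀ i : ℕ, Fin (dims (i + 1)) → ℝ)
    (wout : Fin (dims L) → ℝ) (cout : ℝ)
    (f : ℝ → ℝ)
    (hf : ∀ x : ℝ,
      f x = ∑ j, wout j * hiddenPass dims W b L (fun _ => x) j + cout) :
    Continuous f ∧ PLSegments f ((2 * M) ^ L) := by
  -- continuity of the hidden pass
  have hcont : ∀ n (j : Fin (dims n)),
      Continuous (fun x : ℝ => hiddenPass dims W b n (fun _ => x) j) := by
    intro n
    induction n with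
    | zero => intro j; simpa [hiddenPass] using continuous_id'
    | succ n ih =>
      intro j
      show Continuous fun x : ℝ =>
        max (∑ j', W n j j' * hiddenPass dims W b n (fun _ => x) j' + b n j) 0
      exact ((continuous_finset_sum _ fun j' _ =>
        continuous_const.mul (ih j')).add continuous_const).max continuous_const
  constructor
  · have hfe : f = fun x => ∑ j, wout j * hiddenPass dims W b L (fun _ => x) j + cout :=
      funext hf
    rw [hfe]
    exact (continuous_finset_sum _ fun j _ =>
      continuous_const.mul (hcont L j)).add continuous_const
  -- piecewise linearity
  have main : ∀ n, n ≤ L →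
      PLFam (dims n) (fun x => hiddenPass dims W b n (fun _ => x)) ((2 * M) ^ n) := by
    intro n
    induction n with
    | zero =>
      intro _
      exact ⟨fun _ _ => 1, fun _ _ => 0, fun _ => ⟨0, by norm_num⟩,
        monotone_const, by simp [hiddenPass]⟩
    | succ n ih =>
      intro hn
      have h1 := ih (Nat.le_of_succ_le hn)
      have h2 := plfam_step h1 (W n) (b n)
      have h3 : PLFam (dims (n + 1))
          (fun x => hiddenPass dims W b (n + 1) (fun _ => x))
          ((2 * M) ^ n * (dims (n + 1) + 1)) := by
        exact h2
      apply h3.mono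
      have hd : dims (n + 1) + 1 ≤ 2 * M := by
        have := hdimsM (n + 1) (Nat.succ_le_succ (Nat.zero_le n)) hn
        omega
      calc (2 * M) ^ n * (dims (n + 1) + 1) ≤ (2 * M) ^ n * (2 * M) :=
        Nat.mul_le_mul_left _ hd
      _ = (2 * M) ^ (n + 1) := (pow_succ _ _).symm
  obtain ⟨α, β, idx, hm, he⟩ := main L le_rfl
  exact ⟨fun s => ∑ j, wout j * α s j, fun s => (∑ j, wout j * β s j) + cout,
    idx, hm, fun x => by
      rw [hf]
      simp only [he, mul_add, Finset.sum_add_distrib, Finset.sum_mul, mul_assoc]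
      ring⟩
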